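/- (Contraction of products of centered kernels.) Let P₁, …, P_{H−1} be row-stochastic matrices on a finite set Z, each P_h admitting a stationary distribution ν_h, and let Π_h be the matrix with every row equal to ν_h. Then for every g : Z → ℝ: ‖ ( Π_{h=1}^{H−1} (P_h − Π_h) )·g ‖_∞ ≤ 2·( Π_{h=1}^{H−1} δ(P_h) )·‖g‖_∞. In particular, if every P_h is η-regular for some η ≥ 1, then ‖ ( Π_{h=1}^{H−1} (P_h − Π_h) )·g ‖_∞ ≤ 2·(1 − 1/η)^{H−1}·‖g‖_∞. -/
import Mathlib


open Finset

/-- `μ` is a probability mass function on the finite type `Z`. -/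
def IsPMF {Z : Type*} [Fintype Z] (μ : Z → ℝ) : Prop :=
  (∀ z, 0 ≤ μ z) ∧ ∑ z, μ z = 1

/-- A row-stochastic kernel on `Z`. -/
def IsRowStochastic {Z : Type*} [Fintype Z] (P : Z → Z → ℝ) : Prop :=
  (∀ x y, 0 ≤ P x y) ∧ ∀ x, ∑ y, P x y = 1

/-- An `η`-regular row-stochastic kernel. -/
def IsRegularKernel {Z : Type*} [Fintype Z] (η : ℝ) (P : Z → Z → ℝ) : Prop :=
  IsRowStochastic P ∧ (∀ x y, 0 < P x y) ∧
    ∀ x y z, P x y ≤ η * P x z ∧ P y x ≤ η * P z x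

/-- Sup norm of a function on a finite nonempty type. -/
noncomputable def supNorm {Z : Type*} [Fintype Z] [Nonempty Z] (φ : Z → ℝ) : ℝ :=
  Finset.univ.sup' Finset.univ_nonempty fun z => |φ z|

/-- Dobrushin ergodic coefficient `δ(P) = max_{x,y} d_TV(P(x,·), P(y,·))`. -/
noncomputable def dobrushin {Z : Type*} [Fintype Z] [Nonempty Z] (P : Matrix Z Z ℝ) : ℝ :=
  Finset.univ.sup' Finset.univ_nonempty fun q : Z × Z =>
    (1 / 2) * ∑ z, |P q.1 z - P q.2 z|

section Aux
variable {Z : Type*} [Fintype Z] [Nonempty Z]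

noncomputable def spanF (φ : Z → ℝ) : ℝ :=
  Finset.univ.sup' Finset.univ_nonempty (fun q : Z × Z => φ q.1 - φ q.2)

lemma sub_le_spanF (φ : Z → ℝ) (x y : Z) : φ x - φ y ≤ spanF φ :=
  Finset.le_sup' (f := fun q : Z × Z => φ q.1 - φ q.2) (Finset.mem_univ (x, y))

lemma spanF_nonneg (φ : Z → ℝ) : 0 ≤ spanF φ := by
  have := sub_le_spanF φ (Classical.arbitrary Z) (Classical.arbitrary Z)
  simpa using this

lemma abs_le_supNorm (φ : Z → ℝ) (z : Z) : |φ z| ≤ supNorm φ :=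
  Finset.le_sup' (f := fun z => |φ z|) (Finset.mem_univ z)

lemma supNorm_nonneg (φ : Z → ℝ) : 0 ≤ supNorm φ :=
  le_trans (abs_nonneg _) (abs_le_supNorm φ (Classical.arbitrary Z))

lemma supNorm_le {φ : Z → ℝ} {c : ℝ} (h : ∀ z, |φ z| ≤ c) : supNorm φ ≤ c :=
  Finset.sup'_le _ _ fun z _ => h z

lemma spanF_le_two_supNorm (φ : Z → ℝ) : spanF φ ≤ 2 * supNorm φ := by
  apply Finset.sup'_le
  intro q _
  have h1 := abs_le_supNorm φ q.1
  have h2 := abs_le_supNorm φ q.2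
  have := abs_sub_abs_le_abs_sub (φ q.1) (φ q.2)
  cases abs_cases (φ q.1) with
  | inl h => cases abs_cases (φ q.2) with
    | inl h' => linarith [h.1, h'.1]
    | inr h' => linarith [h.1, h'.1]
  | inr h => cases abs_cases (φ q.2) with
    | inl h' => linarith [h.1, h'.1]
    | inr h' => linarith [h.1, h'.1]

/-- Core estimate: for two measures with equal total mass,
`|∑ (p-q) v| ≤ (½ ∑|p-q|) · span v`. -/
lemma core_estimate (p q v : Z → ℝ) (hpq : ∑ z, p z = ∑ z, q z) :
    |∑ z, (p z - q z) * v z| ≤ ((1/2) * ∑ z, |p z - q z|) * spanF v := by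
  set a : ℝ := Finset.univ.sup' Finset.univ_nonempty v with ha
  set b : ℝ := Finset.univ.inf' Finset.univ_nonempty v with hb
  have hva : ∀ z, v z ≤ a := fun z => Finset.le_sup' v (Finset.mem_univ z)
  have hvb : ∀ z, b ≤ v z := fun z => Finset.inf'_le v (Finset.mem_univ z)
  have hab : a - b ≤ spanF v := by
    obtain ⟨x, -, hx⟩ := Finset.exists_mem_eq_sup' (Finset.univ_nonempty) v
    obtain ⟨y, -, hy⟩ := Finset.exists_mem_eq_inf' (Finset.univ_nonempty) v
    rw [← ha] at hx; rw [← hb] at hy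
    rw [hx, hy]; exact sub_le_spanF v x y
  set c : ℝ := (a + b) / 2 with hc
  have hs : ∑ z, (p z - q z) = 0 := by rw [Finset.sum_sub_distrib, hpq, sub_self]
  have key : ∑ z, (p z - q z) * v z = ∑ z, (p z - q z) * (v z - c) := by
    simp only [mul_sub]
    rw [Finset.sum_sub_distrib, ← Finset.sum_mul, hs, zero_mul, sub_zero]
  rw [key]
  calc |∑ z, (p z - q z) * (v z - c)| ≤ ∑ z, |(p z - q z) * (v z - c)| :=
        Finset.abs_sum_le_sum_abs _ _
    _ ≤ ∑ z, |p z - q z| * ((a - b)/2) := by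
        apply Finset.sum_le_sum
        intro z _
        rw [abs_mul]
        apply mul_le_mul_of_nonneg_left _ (abs_nonneg _)
        rw [abs_le]
        refine ⟨?_, ?_⟩ <;> · rw [hc]; have := hva z; have := hvb z; linarith
    _ = ((1/2) * ∑ z, |p z - q z|) * (a - b) := by rw [← Finset.sum_mul]; ring
    _ ≤ ((1/2) * ∑ z, |p z - q z|) * spanF v := by
        apply mul_le_mul_of_nonneg_left hab
        positivity

end Aux

section Kernel
variable {Z : Type*} [Fintype Z] [Nonempty Z]

lemma dTV_le_dobrushin (P : Matrix Z Z ℝ) (x y : Z) :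
    (1/2) * ∑ z, |P x z - P y z| ≤ dobrushin P :=
  Finset.le_sup' (f := fun q : Z × Z => (1/2) * ∑ z, |P q.1 z - P q.2 z|)
    (Finset.mem_univ (x, y))

lemma dobrushin_nonneg (P : Matrix Z Z ℝ) : 0 ≤ dobrushin P := by
  have := dTV_le_dobrushin P (Classical.arbitrary Z) (Classical.arbitrary Z)
  simpa using this

variable {P : Matrix Z Z ℝ} {ν : Z → ℝ}
  (hP : (∀ x y, 0 ≤ P x y) ∧ ∀ x, ∑ y, P x y = 1)
  (hν0 : ∀ z, 0 ≤ ν z) (hν1 : ∑ z, ν z = 1)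
  (hsta : ∀ y, ∑ x, ν x * P x y = ν y)

include hP in
lemma pair_core (v : Z → ℝ) (x y : Z) :
    |∑ z, (P x z - P y z) * v z| ≤ dobrushin P * spanF v := by
  calc |∑ z, (P x z - P y z) * v z| ≤ ((1/2) * ∑ z, |P x z - P y z|) * spanF v :=
        core_estimate _ _ v (by rw [hP.2 x, hP.2 y])
    _ ≤ dobrushin P * spanF v :=
        mul_le_mul_of_nonneg_right (dTV_le_dobrushin P x y) (spanF_nonneg v)

lemma centered_entry (v : Z → ℝ) (x : Z) :
    ((P - Matrix.of fun _ y => ν y).mulVec v) x = ∑ z, (P x z - ν z) * v z := by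
  simp [Matrix.mulVec, dotProduct, Matrix.sub_apply]

include hP hν0 hν1 hsta in
lemma step_entry (v : Z → ℝ) (x : Z) :
    |((P - Matrix.of fun _ y => ν y).mulVec v) x| ≤ dobrushin P * spanF v := by
  rw [centered_entry]
  have expand : ∑ z, (P x z - ν z) * v z = ∑ w, ν w * ∑ z, (P x z - P w z) * v z := by
    symm
    simp only [Finset.mul_sum]
    rw [Finset.sum_comm]
    apply Finset.sum_congr rfl
    intro z _
    have h1 : ∑ w, ν w * ((P x z - P w z) * v z)
        = (∑ w, ν w) * (P x z * v z) - (∑ w, ν w * P w z) * v z := by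
      rw [Finset.sum_mul, Finset.sum_mul, ← Finset.sum_sub_distrib]
      apply Finset.sum_congr rfl
      intro w _
      ring
    rw [h1, hν1, hsta z]
    ring
  rw [expand]
  calc |∑ w, ν w * ∑ z, (P x z - P w z) * v z|
      ≤ ∑ w, |ν w * ∑ z, (P x z - P w z) * v z| := Finset.abs_sum_le_sum_abs _ _
    _ ≤ ∑ w, ν w * (dobrushin P * spanF v) := by
        apply Finset.sum_le_sum
        intro w _
        rw [abs_mul, abs_of_nonneg (hν0 w)]
        exact mul_le_mul_of_nonneg_left (pair_core hP v x w) (hν0 w)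
    _ = dobrushin P * spanF v := by rw [← Finset.sum_mul, hν1, one_mul]

include hP hν0 hν1 hsta in
lemma step_supNorm (v : Z → ℝ) :
    supNorm ((P - Matrix.of fun _ y => ν y).mulVec v) ≤ dobrushin P * spanF v :=
  supNorm_le fun x => step_entry hP hν0 hν1 hsta v x

include hP in
lemma step_spanF (v : Z → ℝ) :
    spanF ((P - Matrix.of fun _ y => ν y).mulVec v) ≤ dobrushin P * spanF v := by
  apply Finset.sup'_le
  intro q _
  have hdiff : ((P - Matrix.of fun _ y => ν y).mulVec v) q.1
      - ((P - Matrix.of fun _ y => ν y).mulVec v) q.2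
      = ∑ z, (P q.1 z - P q.2 z) * v z := by
    rw [centered_entry, centered_entry, ← Finset.sum_sub_distrib]
    apply Finset.sum_congr rfl
    intro z _
    ring
  rw [hdiff]
  exact le_trans (le_abs_self _) (pair_core hP v q.1 q.2)

end Kernel


section Main
variable {Z : Type*} [Fintype Z] [DecidableEq Z] [Nonempty Z]

lemma prod_bound (N : ℕ) (P : ℕ → Matrix Z Z ℝ) (ν : ℕ → Z → ℝ)
    (Pi : ℕ → Matrix Z Z ℝ) (hPi : ∀ h, Pi h = Matrix.of fun _ y => ν h y) :
    ∀ (_ : ∀ h < N, (∀ x y, 0 ≤ P h x y) ∧ ∀ x, ∑ y, P h x y = 1)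
      (_ : ∀ h < N, (∀ z, 0 ≤ ν h z) ∧ (∑ z, ν h z = 1)
            ∧ ∀ y, ∑ x, ν h x * P h x y = ν h y)
      (g : Z → ℝ),
    spanF ((((List.range N).map fun h => P h - Pi h).prod).mulVec g)
      ≤ (∏ h ∈ Finset.range N, dobrushin (P h)) * spanF g
    ∧ (1 ≤ N → supNorm ((((List.range N).map fun h => P h - Pi h).prod).mulVec g)
      ≤ (∏ h ∈ Finset.range N, dobrushin (P h)) * spanF g) := by
  induction N with
  | zero =>
    intro _ _ g
    simp [Matrix.one_mulVec]
  | succ N ih =>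
    intro hP hν g
    have hNlt : N < N + 1 := Nat.lt_succ_self N
    have hPlt : ∀ h < N, (∀ x y, 0 ≤ P h x y) ∧ ∀ x, ∑ y, P h x y = 1 :=
      fun h hh => hP h (hh.trans hNlt)
    have hνlt : ∀ h < N, (∀ z, 0 ≤ ν h z) ∧ (∑ z, ν h z = 1)
        ∧ ∀ y, ∑ x, ν h x * P h x y = ν h y := fun h hh => hν h (hh.trans hNlt)
    have hPN := hP N hNlt
    obtain ⟨hνN0, hνN1, hνNs⟩ := hν N hNlt
    set v : Z → ℝ := (P N - Pi N).mulVec g with hv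
    have hprod : (((List.range (N+1)).map fun h => P h - Pi h).prod).mulVec g
        = (((List.range N).map fun h => P h - Pi h).prod).mulVec v := by
      rw [List.range_succ, List.map_append, List.prod_append, hv,
        Matrix.mulVec_mulVec]
      simp
    have hsv : spanF v ≤ dobrushin (P N) * spanF g := by
      rw [hv, hPi N]
      exact step_spanF hPN g
    have hsupv : supNorm v ≤ dobrushin (P N) * spanF g := by
      rw [hv, hPi N]
      exact step_supNorm hPN hνN0 hνN1 hνNs g
    have hprodnn : 0 ≤ ∏ h ∈ Finset.range N, dobrushin (P h) :=
      Finset.prod_nonneg fun h _ => dobrushin_nonneg _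
    have IH := ih hPlt hνlt v
    have key : (∏ h ∈ Finset.range N, dobrushin (P h)) * spanF v
        ≤ (∏ h ∈ Finset.range (N+1), dobrushin (P h)) * spanF g := by
      rw [Finset.prod_range_succ, mul_assoc]
      exact mul_le_mul_of_nonneg_left hsv hprodnn
    constructor
    · rw [hprod]
      exact le_trans IH.1 key
    · intro _
      rw [hprod]
      rcases Nat.eq_zero_or_pos N with hN0 | hNpos
      · subst hN0
        simpa [Matrix.one_mulVec, Finset.prod_range_one] using hsupv
      · exact le_trans (IH.2 hNpos) key

lemma dobrushin_le_regular {η : ℝ} (hη : 1 ≤ η) {P : Matrix Z Z ℝ}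
    (hrs : ∀ x, ∑ y, P x y = 1) (hpos : ∀ x y, 0 < P x y)
    (hcomp : ∀ x y z, P x y ≤ η * P x z ∧ P y x ≤ η * P z x) :
    dobrushin P ≤ 1 - 1 / η := by
  apply Finset.sup'_le
  rintro ⟨x, y⟩ -
  have hη0 : (0:ℝ) < η := lt_of_lt_of_le one_pos hη
  have hbd : ∀ z, |P x z - P y z| ≤ P x z + P y z - 2 / η * P x z := by
    intro z
    have ha : 0 ≤ P x z := (hpos x z).le
    have hb : 0 ≤ P y z := (hpos y z).le
    have hab : P x z ≤ η * P y z := (hcomp z x y).2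
    have hdiv : P x z / η ≤ P y z := by
      rw [div_le_iff₀ hη0]; linarith
    have hdiv2 : P x z / η ≤ P x z := div_le_self ha hη
    have hrw : 2 / η * P x z = 2 * (P x z / η) := by ring
    rcases abs_cases (P x z - P y z) with ⟨h, -⟩ | ⟨h, -⟩ <;> rw [h, hrw] <;> linarith
  have hsum : ∑ z, |P x z - P y z| ≤ 2 - 2 / η := by
    calc ∑ z, |P x z - P y z| ≤ ∑ z, (P x z + P y z - 2 / η * P x z) :=
          Finset.sum_le_sum fun z _ => hbd z
      _ = (∑ z, P x z) + (∑ z, P y z) - 2 / η * ∑ z, P x z := by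
          rw [Finset.sum_sub_distrib, Finset.sum_add_distrib, Finset.mul_sum]
      _ = 2 - 2 / η := by rw [hrs x, hrs y]; ring
  show (1/2) * ∑ z, |P x z - P y z| ≤ 1 - 1/η
  have h2 : 2/η = 2*(1/η) := by ring
  linarith

end Main

/-- **Contraction of products of centered kernels.**
Here there are `N` matrices `P 0, …, P (N-1)` (`N` plays the role of `H − 1`), each
with a stationary distribution `ν h`, and `Π' h` has all rows equal to `ν h`. -/
theorem contraction_centered_products
    {Z : Type*} [Fintype Z] [DecidableEq Z] [Nonempty Z]
    (N : ℕ)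
    (P : ℕ → Matrix Z Z ℝ) (hP : ∀ h < N, IsRowStochastic fun x y => P h x y)
    (ν : ℕ → Z → ℝ)
    (hν : ∀ h < N, IsPMF (ν h) ∧ ∀ y, ∑ x, ν h x * P h x y = ν h y)
    (Pi : ℕ → Matrix Z Z ℝ) (hPi : ∀ h, Pi h = Matrix.of fun _ y => ν h y) :
    (∀ g : Z → ℝ,
        supNorm ((((List.range N).map fun h => P h - Pi h).prod).mulVec g)
          ≤ 2 * (∏ h ∈ Finset.range N, dobrushin (P h)) * supNorm g)
    ∧ ∀ η : ℝ, 1 ≤ η → (∀ h < N, IsRegularKernel η fun x y => P h x y) →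
        ∀ g : Z → ℝ,
          supNorm ((((List.range N).map fun h => P h - Pi h).prod).mulVec g)
            ≤ 2 * (1 - 1 / η) ^ N * supNorm g := by

  have hP' : ∀ h < N, (∀ x y, 0 ≤ P h x y) ∧ ∀ x, ∑ y, P h x y = 1 :=
    fun h hh => ⟨fun x y => (hP h hh).1 x y, (hP h hh).2⟩
  have hν' : ∀ h < N, (∀ z, 0 ≤ ν h z) ∧ (∑ z, ν h z = 1)
      ∧ ∀ y, ∑ x, ν h x * P h x y = ν h y :=
    fun h hh => ⟨(hν h hh).1.1, (hν h hh).1.2, (hν h hh).2⟩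
  have hprodnn : 0 ≤ ∏ h ∈ Finset.range N, dobrushin (P h) :=
    Finset.prod_nonneg fun h _ => dobrushin_nonneg _
  have part1 : ∀ g : Z → ℝ,
      supNorm ((((List.range N).map fun h => P h - Pi h).prod).mulVec g)
        ≤ 2 * (∏ h ∈ Finset.range N, dobrushin (P h)) * supNorm g := by
    intro g
    rcases Nat.eq_zero_or_pos N with hN0 | hNpos
    · subst hN0
      simp only [List.range_zero, List.map_nil, List.prod_nil, Matrix.one_mulVec,
        Finset.range_zero, Finset.prod_empty]
      have := supNorm_nonneg g
      linarith
    · have h1 := (prod_bound N P ν Pi hPi hP' hν' g).2 hNpos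
      calc supNorm ((((List.range N).map fun h => P h - Pi h).prod).mulVec g)
          ≤ (∏ h ∈ Finset.range N, dobrushin (P h)) * spanF g := h1
        _ ≤ (∏ h ∈ Finset.range N, dobrushin (P h)) * (2 * supNorm g) :=
            mul_le_mul_of_nonneg_left (spanF_le_two_supNorm g) hprodnn
        _ = 2 * (∏ h ∈ Finset.range N, dobrushin (P h)) * supNorm g := by ring
  refine ⟨part1, ?_⟩
  intro η hη hreg g
  have hδ : ∏ h ∈ Finset.range N, dobrushin (P h) ≤ (1 - 1/η) ^ N := by
    calc ∏ h ∈ Finset.range N, dobrushin (P h)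
        ≤ ∏ _h ∈ Finset.range N, (1 - 1/η) := by
          apply Finset.prod_le_prod (fun h _ => dobrushin_nonneg _)
          intro h hh
          obtain ⟨hrs, hpos, hcomp⟩ := hreg h (Finset.mem_range.mp hh)
          exact dobrushin_le_regular hη hrs.2 hpos hcomp
      _ = (1 - 1/η) ^ N := by rw [Finset.prod_const, Finset.card_range]
  calc supNorm ((((List.range N).map fun h => P h - Pi h).prod).mulVec g)
      ≤ 2 * (∏ h ∈ Finset.range N, dobrushin (P h)) * supNorm g := part1 g
    _ ≤ 2 * (1 - 1/η) ^ N * supNorm g := by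
        apply mul_le_mul_of_nonneg_right _ (supNorm_nonneg g)
        linarith
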